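/- arXiv:2603.20726 — 6 statements merged into one kernel-verified Lean document; each statement's English description precedes it below -/
import Mathlib

section
/- For all real numbers p and q, φ(p,q) = 0 if and only if p ≥ 0, q ≥ 0 and p·q = 0 (i.e., φ is an NCP-function). -/
/-- The Kanzow–Schwartz regularization function. -/
noncomputable def phi (p q : ℝ) : ℝ :=
  if 0 ≤ p + q then p * q else -(p ^ 2 + q ^ 2) / 2

/-- φ is an NCP-function: φ(p,q) = 0 iff p ≥ 0, q ≥ 0 and p·q = 0. -/
theorem phi_eq_zero_iff (p q : ℝ) :
    phi p q = 0 ↔ 0 ≤ p ∧ 0 ≤ q ∧ p * q = 0 := by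
  unfold phi
  split_ifs with h
  · constructor
    · intro hpq
      rcases mul_eq_zero.mp hpq with h0 | h0 <;> subst h0 <;>
        simp_all
    · tauto
  · constructor
    · intro h0
      have hp : p = 0 ∧ q = 0 := by
        constructor <;> nlinarith [sq_nonneg p, sq_nonneg q]
      simp [hp.1, hp.2]
    · rintro ⟨hp, hq, _⟩
      exfalso; push_neg at h; linarith
end

section
/- The function φ : ℝ × ℝ → ℝ is continuously differentiable (of class C¹) on all of ℝ × ℝ. -/
lemma plussq_hasDerivAt (x : ℝ) :
    HasDerivAt (fun y : ℝ => (max y 0) ^ 2) (2 * max x 0) x := by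
  rcases lt_trichotomy x 0 with hx | hx | hx
  · have h : (fun y : ℝ => (max y 0) ^ 2) =ᶠ[nhds x] fun _ => (0:ℝ) := by
      filter_upwards [eventually_lt_nhds hx] with y hy
      simp [max_eq_right hy.le]
    have : HasDerivAt (fun _ : ℝ => (0:ℝ)) 0 x := hasDerivAt_const x 0
    have := this.congr_of_eventuallyEq h
    simpa [max_eq_right hx.le] using this
  · subst hx
    rw [hasDerivAt_iff_isLittleO]
    simp only [max_self, ne_eq, OfNat.ofNat_ne_zero, not_false_eq_true, zero_pow, mul_zero,
      sub_zero, zero_mul, smul_zero]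
    rw [Asymptotics.isLittleO_iff]
    intro c hc
    rw [Metric.eventually_nhds_iff]
    refine ⟨c, hc, fun y hy => ?_⟩
    simp only [Real.dist_eq, sub_zero] at hy
    have h1 : |(max y 0) ^ 2| ≤ |y| * |y| := by
      rw [abs_of_nonneg (by positivity), sq]
      have : max y 0 ≤ |y| := max_le (le_abs_self y) (abs_nonneg y)
      exact mul_le_mul this this (le_max_right y 0) (abs_nonneg y)
    calc ‖(max y 0) ^ 2‖ ≤ |y| * |y| := h1
      _ ≤ c * ‖y‖ := by
          apply mul_le_mul_of_nonneg_right hy.le (abs_nonneg y)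
  · have h : (fun y : ℝ => (max y 0) ^ 2) =ᶠ[nhds x] fun y => y ^ 2 := by
      filter_upwards [eventually_gt_nhds hx] with y hy
      simp [max_eq_left hy.le]
    have : HasDerivAt (fun y : ℝ => y ^ 2) (2 * x) x := by
      simpa using (hasDerivAt_pow 2 x)
    have := this.congr_of_eventuallyEq h
    simpa [max_eq_left hx.le] using this

lemma plussq_contDiff : ContDiff ℝ 1 (fun y : ℝ => (max y 0) ^ 2) := by
  rw [contDiff_one_iff_deriv]
  constructor
  · exact fun x => (plussq_hasDerivAt x).differentiableAt
  · have h : deriv (fun y : ℝ => (max y 0) ^ 2) = fun x => 2 * max x 0 := by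
      funext x; exact (plussq_hasDerivAt x).deriv
    rw [h]
    exact continuous_const.mul (continuous_id.max continuous_const)

/-- φ is continuously differentiable on all of ℝ × ℝ. -/
theorem phi_contDiff :
    ContDiff ℝ 1 (fun x : ℝ × ℝ => phi x.1 x.2) := by
  have key : (fun x : ℝ × ℝ => phi x.1 x.2) =
      fun x : ℝ × ℝ => ((max (x.1 + x.2) 0) ^ 2 - x.1 ^ 2 - x.2 ^ 2) / 2 := by
    funext x
    simp only [phi]
    split_ifs with h
    · rw [max_eq_left h]; ring
    · rw [max_eq_right (le_of_not_ge h)]; ring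
  rw [key]
  have h1 : ContDiff ℝ 1 (fun x : ℝ × ℝ => (max (x.1 + x.2) 0) ^ 2) :=
    plussq_contDiff.comp (contDiff_fst.add contDiff_snd)
  exact ((h1.sub (contDiff_fst.pow 2)).sub (contDiff_snd.pow 2)).div_const 2
end

section
/- At every point (p,q) ∈ ℝ × ℝ, the function φ has Fréchet derivative equal to the linear map (u,v) ↦ q·u + p·v when p + q ≥ 0, and equal to the linear map (u,v) ↦ -p·u - q·v when p + q < 0; that is, the gradient of φ at (p,q) is (q,p) if p + q ≥ 0 and (-p,-q) if p + q < 0. -/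
/-- The Fréchet derivative of φ at (p,q) is (u,v) ↦ q·u + p·v when p + q ≥ 0,
and (u,v) ↦ -p·u - q·v when p + q < 0; i.e. the gradient is (q,p) resp. (-p,-q). -/
theorem phi_hasFDerivAt (p q : ℝ) :
    HasFDerivAt (fun x : ℝ × ℝ => phi x.1 x.2)
      (if 0 ≤ p + q then
        q • ContinuousLinearMap.fst ℝ ℝ ℝ + p • ContinuousLinearMap.snd ℝ ℝ ℝ
      else
        (-p) • ContinuousLinearMap.fst ℝ ℝ ℝ + (-q) • ContinuousLinearMap.snd ℝ ℝ ℝ)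
      (p, q) := by
  rcases lt_trichotomy (p + q) 0 with hlt | heq | hgt
  · -- negative open region
    rw [if_neg (not_le.mpr hlt)]
    have hev : (fun x : ℝ × ℝ => phi x.1 x.2) =ᶠ[nhds (p, q)]
        fun x : ℝ × ℝ => -(x.1 * x.1 + x.2 * x.2) / 2 := by
      have hopen : IsOpen {x : ℝ × ℝ | x.1 + x.2 < 0} :=
        isOpen_lt (continuous_fst.add continuous_snd) continuous_const
      filter_upwards [hopen.mem_nhds hlt] with x hx
      simp only [phi, if_neg (not_le.mpr hx)]
      ring
    have h1 : HasFDerivAt (fun x : ℝ × ℝ => -(x.1 * x.1 + x.2 * x.2) / 2)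
        ((-p) • ContinuousLinearMap.fst ℝ ℝ ℝ + (-q) • ContinuousLinearMap.snd ℝ ℝ ℝ)
        (p, q) := by
      have hfst : HasFDerivAt (fun x : ℝ × ℝ => x.1)
          (ContinuousLinearMap.fst ℝ ℝ ℝ) (p, q) := hasFDerivAt_fst
      have hsnd : HasFDerivAt (fun x : ℝ × ℝ => x.2)
          (ContinuousLinearMap.snd ℝ ℝ ℝ) (p, q) := hasFDerivAt_snd
      have this := (((hfst.mul hfst).add (hsnd.mul hsnd)).neg).const_smul ((2:ℝ)⁻¹)
      have heq2 : (fun x : ℝ × ℝ => -(x.1 * x.1 + x.2 * x.2) / 2)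
          = fun x : ℝ × ℝ => (2:ℝ)⁻¹ • -(x.1 * x.1 + x.2 * x.2) := by
        funext x; simp [smul_eq_mul]; ring
      rw [heq2]
      refine this.congr_fderiv ?_
      ext x <;> simp <;> ring
    exact h1.congr_of_eventuallyEq hev
  · -- boundary case p + q = 0
    have hq : q = -p := by linarith
    rw [if_pos heq.ge]
    rw [hasFDerivAt_iff_isLittleO_nhds_zero]
    have hO : (fun h : ℝ × ℝ => phi ((p, q).1 + h.1) ((p, q).2 + h.2) - phi p q -
        (q • ContinuousLinearMap.fst ℝ ℝ ℝ + p • ContinuousLinearMap.snd ℝ ℝ ℝ) h)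
        =O[nhds 0] fun h : ℝ × ℝ => ‖h‖ ^ 2 := by
      apply Asymptotics.isBigO_of_le
      intro h
      have h1 : |h.1| ≤ ‖h‖ := norm_fst_le h
      have h2 : |h.2| ≤ ‖h‖ := norm_snd_le h
      have hn : (0:ℝ) ≤ ‖h‖ := norm_nonneg h
      simp only [phi, if_pos heq.ge, ContinuousLinearMap.add_apply,
        ContinuousLinearMap.coe_smul', Pi.smul_apply, ContinuousLinearMap.coe_fst',
        ContinuousLinearMap.coe_snd', smul_eq_mul]
      rw [Real.norm_eq_abs, Real.norm_eq_abs, abs_of_nonneg (by positivity : (0:ℝ) ≤ ‖h‖^2)]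
      by_cases hc : 0 ≤ p + h.1 + (q + h.2)
      · rw [if_pos hc]
        have : (p + h.1) * (q + h.2) - p * q - (q * h.1 + p * h.2) = h.1 * h.2 := by ring
        rw [this, abs_mul]
        calc |h.1| * |h.2| ≤ ‖h‖ * ‖h‖ := by
              exact mul_le_mul h1 h2 (abs_nonneg _) hn
          _ = ‖h‖ ^ 2 := by ring
      · rw [if_neg hc]
        have : -((p + h.1) ^ 2 + (q + h.2) ^ 2) / 2 - p * q - (q * h.1 + p * h.2)
            = -(h.1 ^ 2 + h.2 ^ 2) / 2 := by rw [hq]; ring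
        rw [this]
        have e1 : h.1 ^ 2 ≤ ‖h‖ ^ 2 := by
          nlinarith [sq_abs h.1, abs_nonneg h.1]
        have e2 : h.2 ^ 2 ≤ ‖h‖ ^ 2 := by
          nlinarith [sq_abs h.2, abs_nonneg h.2]
        rw [abs_div, abs_neg, abs_of_nonneg (by positivity : (0:ℝ) ≤ h.1^2 + h.2^2)]
        simp only [abs_two]
        nlinarith
    exact hO.trans_isLittleO (Asymptotics.isLittleO_norm_pow_id one_lt_two)
  · -- positive open region
    rw [if_pos hgt.le]
    have hev : (fun x : ℝ × ℝ => phi x.1 x.2) =ᶠ[nhds (p, q)]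
        fun x : ℝ × ℝ => x.1 * x.2 := by
      have hopen : IsOpen {x : ℝ × ℝ | 0 < x.1 + x.2} :=
        isOpen_lt continuous_const (continuous_fst.add continuous_snd)
      filter_upwards [hopen.mem_nhds hgt] with x hx
      simp [phi, hx.le]
    have h1 : HasFDerivAt (fun x : ℝ × ℝ => x.1 * x.2)
        (q • ContinuousLinearMap.fst ℝ ℝ ℝ + p • ContinuousLinearMap.snd ℝ ℝ ℝ) (p, q) := by
      have := (hasFDerivAt_fst (𝕜 := ℝ) (p := (p, q))).mul
        (hasFDerivAt_snd (𝕜 := ℝ) (p := (p, q)))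
      refine this.congr_fderiv ?_
      ext x <;> simp <;> ring
    exact h1.congr_of_eventuallyEq hev
end

section
/- Let E : ℝⁿ → ℝ be continuously differentiable and bounded below by 0, let w : ℝ → ℝⁿ satisfy w'(t) = -∇E(w(t)) for all t ≥ t₀ with w(t₀) = w₀, and assume the level set L(w₀) = {w ∈ ℝⁿ : E(w) ≤ E(w₀)} is bounded. Then there exist a point w* ∈ ℝⁿ and a strictly increasing sequence {t_k} with t_k → ∞ such that w(t_k) → w* as k → ∞ and ∇E(w*) = 0 (i.e., w* is an equilibrium point of the gradient flow). -/
open Filter Topology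

/-- If E is C¹, bounded below by 0, and the level set of the initial point is
bounded, then the gradient flow w'(t) = -∇E(w(t)) admits an equilibrium point w*
(∇E(w*) = 0) and a strictly increasing time sequence t_k → ∞ with w(t_k) → w*. -/
theorem gradient_flow_equilibrium_exists {n : ℕ}
    (E : EuclideanSpace ℝ (Fin n) → ℝ) (hE : ContDiff ℝ 1 E)
    (hE_nonneg : ∀ u, 0 ≤ E u)
    (t₀ : ℝ) (w : ℝ → EuclideanSpace ℝ (Fin n))
    (w₀ : EuclideanSpace ℝ (Fin n)) (hw₀ : w t₀ = w₀)
    (hw : ∀ t, t₀ ≤ t → HasDerivAt w (-(gradient E (w t))) t)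
    (hlevel : Bornology.IsBounded {u : EuclideanSpace ℝ (Fin n) | E u ≤ E w₀}) :
    ∃ (wstar : EuclideanSpace ℝ (Fin n)) (tk : ℕ → ℝ),
      StrictMono tk ∧ Tendsto tk atTop atTop ∧
      Tendsto (fun k => w (tk k)) atTop (𝓝 wstar) ∧
      gradient E wstar = 0 := by
  classical
  have hdiff : Differentiable ℝ E := hE.differentiable one_ne_zero
  -- derivative of t ↦ E (w t)
  have hf : ∀ t, t₀ ≤ t → HasDerivAt (fun s => E (w s)) (-‖gradient E (w t)‖ ^ 2) t := by
    intro t ht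
    have h1 : HasFDerivAt E (InnerProductSpace.toDual ℝ _ (gradient E (w t))) (w t) :=
      (hdiff (w t)).hasGradientAt.hasFDerivAt
    have h2 := h1.comp_hasDerivAt t (hw t ht)
    rw [InnerProductSpace.toDual_apply_apply, inner_neg_right, real_inner_self_eq_norm_sq] at h2
    exact h2
  -- monotonicity helper on any Ici T' with T' ≥ t₀, for the perturbed function
  have key : ∀ ε : ℝ, 0 < ε → ∀ T : ℝ, ∃ t, T ≤ t ∧ t₀ ≤ t ∧ ‖gradient E (w t)‖ < ε := by
    intro ε hε T
    by_contra hcon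
    push_neg at hcon
    set T' := max T t₀ with hT'
    have hT't₀ : t₀ ≤ T' := le_max_right _ _
    have hanti : AntitoneOn (fun t => E (w t) + ε ^ 2 * t) (Set.Ici T') := by
      apply antitoneOn_of_deriv_nonpos (convex_Ici T')
      · apply ContinuousOn.add
        · intro t ht
          exact ((hf t (hT't₀.trans ht)).continuousAt).continuousWithinAt
        · exact (continuous_const.mul continuous_id).continuousOn
      · intro t ht
        rw [interior_Ici] at ht
        have ht₀ : t₀ ≤ t := hT't₀.trans ht.le
        have hd : HasDerivAt (fun s => E (w s) + ε ^ 2 * s)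
            (-‖gradient E (w t)‖ ^ 2 + ε ^ 2 * 1) t :=
          (hf t ht₀).add ((hasDerivAt_id t).const_mul (ε ^ 2))
        exact hd.differentiableAt.differentiableWithinAt
      · intro t ht
        rw [interior_Ici] at ht
        have ht₀ : t₀ ≤ t := hT't₀.trans ht.le
        have hTt : T ≤ t := (le_max_left T t₀).trans ht.le
        have hd : HasDerivAt (fun s => E (w s) + ε ^ 2 * s)
            (-‖gradient E (w t)‖ ^ 2 + ε ^ 2 * 1) t :=
          (hf t ht₀).add ((hasDerivAt_id t).const_mul (ε ^ 2))
        rw [hd.deriv]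
        have hge : ε ≤ ‖gradient E (w t)‖ := hcon t hTt ht₀
        nlinarith [hge, hε.le]
    -- derive a contradiction: E (w t) + ε² t ≤ C for all t ≥ T', but E ≥ 0
    set C := E (w T') + ε ^ 2 * T' with hC
    have hbig : ∀ t, T' ≤ t → ε ^ 2 * t ≤ C := by
      intro t ht
      have h3 := hanti (Set.self_mem_Ici) (Set.mem_Ici.mpr ht) ht
      simp only at h3
      have h0 := hE_nonneg (w t)
      rw [hC]
      linarith
    have : ε ^ 2 * (max T' (C / ε ^ 2 + 1)) ≤ C := hbig _ (le_max_left _ _)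
    have hε2 : 0 < ε ^ 2 := by positivity
    have h1 : C / ε ^ 2 + 1 ≤ max T' (C / ε ^ 2 + 1) := le_max_right _ _
    have h2 : ε ^ 2 * (C / ε ^ 2 + 1) ≤ ε ^ 2 * max T' (C / ε ^ 2 + 1) :=
      mul_le_mul_of_nonneg_left h1 hε2.le
    rw [mul_add, mul_div_cancel₀ _ hε2.ne'] at h2
    linarith
  -- construct the sequence sk
  choose pick hpickT hpickt₀ hpicknorm using
    fun (k : ℕ) (T : ℝ) => key (1 / ((k : ℝ) + 1)) (by positivity) T
  set sk : ℕ → ℝ := fun k => Nat.rec (pick 0 t₀) (fun k ih => pick (k + 1) (ih + 1)) k with hsk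
  have hsk0 : sk 0 = pick 0 t₀ := rfl
  have hsksucc : ∀ k, sk (k + 1) = pick (k + 1) (sk k + 1) := fun k => rfl
  have hsklt : ∀ k, sk k + 1 ≤ sk (k + 1) := by
    intro k; rw [hsksucc]; exact hpickT _ _
  have hskmono : StrictMono sk := by
    apply strictMono_nat_of_lt_succ
    intro k
    linarith [hsklt k]
  have hskt₀ : ∀ k, t₀ ≤ sk k := by
    intro k; cases k with
    | zero => exact hpickt₀ 0 t₀
    | succ m => rw [hsksucc]; exact hpickt₀ _ _
  have hsknorm : ∀ k, ‖gradient E (w (sk k))‖ < 1 / ((k : ℝ) + 1) := by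
    intro k; cases k with
    | zero => simpa [hsk0] using hpicknorm 0 t₀
    | succ m => rw [hsksucc]; exact hpicknorm _ _
  have hskge : ∀ k, sk 0 + k ≤ sk k := by
    intro k
    induction k with
    | zero => simp
    | succ m ih =>
      have := hsklt m
      push_cast
      push_cast at ih
      linarith
  have hsktop : Tendsto sk atTop atTop := by
    apply tendsto_atTop_mono hskge
    exact tendsto_atTop_add_const_left _ _ tendsto_natCast_atTop_atTop
  -- E (w t) ≤ E w₀ for t ≥ t₀
  have hantiE : AntitoneOn (fun t => E (w t)) (Set.Ici t₀) := by
    apply antitoneOn_of_deriv_nonpos (convex_Ici t₀)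
    · intro t ht
      exact ((hf t ht).continuousAt).continuousWithinAt
    · intro t ht
      rw [interior_Ici] at ht
      exact (hf t ht.le).differentiableAt.differentiableWithinAt
    · intro t ht
      rw [interior_Ici] at ht
      rw [(hf t ht.le).deriv]
      exact neg_nonpos.mpr (by positivity)
  have hmem : ∀ k, w (sk k) ∈ closure {u : EuclideanSpace ℝ (Fin n) | E u ≤ E w₀} := by
    intro k
    apply subset_closure
    have := hantiE (Set.self_mem_Ici) (Set.mem_Ici.mpr (hskt₀ k)) (hskt₀ k)
    simpa [hw₀] using this
  obtain ⟨wstar, _, φ, hφmono, hφtend⟩ :=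
    hlevel.isCompact_closure.tendsto_subseq hmem
  -- gradient along sk tends to 0
  have hgrad0 : Tendsto (fun k => gradient E (w (sk k))) atTop (𝓝 0) := by
    apply squeeze_zero_norm (fun k => (hsknorm k).le)
    exact tendsto_one_div_add_atTop_nhds_zero_nat
  have hgcont : Continuous (gradient E) := by
    have h1 : Continuous (fderiv ℝ E) := hE.continuous_fderiv one_ne_zero
    exact ((InnerProductSpace.toDual ℝ
      (EuclideanSpace ℝ (Fin n))).symm.continuous).comp h1
  refine ⟨wstar, sk ∘ φ, hskmono.comp hφmono, hsktop.comp hφmono.tendsto_atTop, hφtend, ?_⟩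
  have h1 : Tendsto (fun k => gradient E (w (sk (φ k)))) atTop (𝓝 (gradient E wstar)) :=
    (hgcont.continuousAt.tendsto).comp hφtend
  have h2 : Tendsto (fun k => gradient E (w (sk (φ k)))) atTop (𝓝 0) :=
    hgrad0.comp hφmono.tendsto_atTop
  exact tendsto_nhds_unique h1 h2
end

section
/- Let E : ℝⁿ → ℝ be continuously differentiable and convex, let w* ∈ ℝⁿ satisfy ∇E(w*) = 0, and let w : ℝ → ℝⁿ satisfy w'(t) = -∇E(w(t)) for all t ≥ t₀. Suppose there is a strictly increasing sequence {t_k} with t_k → ∞ such that w(t_k) → w*. Then lim_{t → ∞} w(t) = w*, and w* is a global minimizer of E, i.e., E(w*) ≤ E(u) for all u ∈ ℝⁿ. -/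
open Filter Topology

/-- First-order condition for a convex differentiable function. -/
lemma grad_ineq_aux {n : ℕ} (E : EuclideanSpace ℝ (Fin n) → ℝ) (hE : ContDiff ℝ 1 E)
    (hconv : ConvexOn ℝ Set.univ E) (x y : EuclideanSpace ℝ (Fin n)) :
    (inner ℝ (gradient E x) (y - x) : ℝ) ≤ E y - E x := by
  set g : ℝ → ℝ := fun s => E (AffineMap.lineMap x y s) with hg
  have hgconv : ConvexOn ℝ Set.univ g := by
    have := hconv.comp_affineMap (AffineMap.lineMap x y)
    exact this
  have hline : ∀ s : ℝ, HasDerivAt (fun s : ℝ => (AffineMap.lineMap x y s : EuclideanSpace ℝ (Fin n))) (y - x) s := by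
    intro s
    simp only [AffineMap.lineMap_apply_module]
    have : HasDerivAt (fun s : ℝ => s • (y - x) + x) (y - x) s := by
      simpa using ((hasDerivAt_id s).smul_const (y - x)).add_const x
    convert this using 2 with u
    module
  have hEd : HasGradientAt E (gradient E x) x :=
    ((hE.differentiable one_ne_zero) x).hasGradientAt
  have hgd : HasDerivAt g (inner ℝ (gradient E x) (y - x) : ℝ) 0 := by
    have h1 : HasFDerivAt E (InnerProductSpace.toDual ℝ _ (gradient E x))
        ((AffineMap.lineMap x y : ℝ →ᵃ[ℝ] EuclideanSpace ℝ (Fin n)) 0) := by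
      simpa using (hasGradientAt_iff_hasFDerivAt.mp hEd)
    have h2 := h1.comp_hasDerivAt (f := fun s : ℝ => (AffineMap.lineMap x y s : EuclideanSpace ℝ (Fin n)))
      0 (by simpa using hline 0)
    simpa [g, Function.comp_def, InnerProductSpace.toDual_apply_apply] using h2
  have := hgconv.le_slope_of_hasDerivAt (Set.mem_univ (0:ℝ)) (Set.mem_univ (1:ℝ)) one_pos hgd
  rw [slope_def_field] at this
  simpa [g] using this

/-- For a convex C¹ function E, if a gradient-flow trajectory has an equilibrium
point w* (∇E(w*) = 0) as limit point along a strictly increasing time sequence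
t_k → ∞, then the whole trajectory converges to w*, and w* is a global
minimizer of E. -/
theorem gradient_flow_converges_to_equilibrium {n : ℕ}
    (E : EuclideanSpace ℝ (Fin n) → ℝ) (hE : ContDiff ℝ 1 E)
    (hconv : ConvexOn ℝ Set.univ E)
    (wstar : EuclideanSpace ℝ (Fin n)) (hstar : gradient E wstar = 0)
    (t₀ : ℝ) (w : ℝ → EuclideanSpace ℝ (Fin n))
    (hw : ∀ t, t₀ ≤ t → HasDerivAt w (-(gradient E (w t))) t)
    (tk : ℕ → ℝ) (htk_mono : StrictMono tk) (htk_top : Tendsto tk atTop atTop)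
    (hconv_seq : Tendsto (fun k => w (tk k)) atTop (𝓝 wstar)) :
    Tendsto w atTop (𝓝 wstar) ∧ ∀ u, E wstar ≤ E u := by
  -- global minimizer
  have hmin : ∀ u, E wstar ≤ E u := by
    intro u
    have := grad_ineq_aux E hE hconv wstar u
    rw [hstar] at this
    simp only [inner_zero_left] at this
    linarith
  -- monotonicity of gradient through wstar
  have hkey : ∀ x, (0:ℝ) ≤ inner ℝ (gradient E x) (x - wstar) := by
    intro x
    have h1 := grad_ineq_aux E hE hconv x wstar
    have h2 : E x ≤ E wstar + (E x - E wstar) := by linarith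
    have h3 : E wstar - E x ≤ 0 := by linarith [hmin x]
    have : (inner ℝ (gradient E x) (wstar - x) : ℝ) ≤ 0 := le_trans h1 h3
    have heq : (inner ℝ (gradient E x) (x - wstar) : ℝ) = -(inner ℝ (gradient E x) (wstar - x) : ℝ) := by
      rw [← inner_neg_right]; congr 1; abel
    rw [heq]; linarith
  -- Lyapunov function
  set f : ℝ → ℝ := fun t => inner ℝ (w t - wstar) (w t - wstar) with hf
  have hfnonneg : ∀ t, 0 ≤ f t := fun t => real_inner_self_nonneg
  have hfderiv : ∀ t, t₀ ≤ t →
      HasDerivAt f (inner ℝ (w t - wstar) (-(gradient E (w t))) + inner ℝ (-(gradient E (w t))) (w t - wstar)) t := by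
    intro t ht
    have hws : HasDerivAt (fun s => w s - wstar) (-(gradient E (w t))) t := (hw t ht).sub_const wstar
    exact HasDerivAt.inner ℝ hws hws
  have hfderiv_nonpos : ∀ t, t₀ ≤ t →
      (inner ℝ (w t - wstar) (-(gradient E (w t))) : ℝ) + inner ℝ (-(gradient E (w t))) (w t - wstar) ≤ 0 := by
    intro t ht
    have := hkey (w t)
    have h1 : (inner ℝ (-(gradient E (w t))) (w t - wstar) : ℝ) = -(inner ℝ (gradient E (w t)) (w t - wstar)) := by
      rw [inner_neg_left]
    have h2 : (inner ℝ (w t - wstar) (-(gradient E (w t))) : ℝ) = -(inner ℝ (gradient E (w t)) (w t - wstar)) := by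
      rw [inner_neg_right, real_inner_comm]
    rw [h1, h2]; linarith
  -- f is antitone on Ici t₀
  have hanti : AntitoneOn f (Set.Ici t₀) := by
    apply antitoneOn_of_deriv_nonpos (convex_Ici t₀)
    · intro t ht
      exact ((hfderiv t ht).continuousAt).continuousWithinAt
    · intro t ht
      rw [interior_Ici] at ht
      exact ((hfderiv t (le_of_lt ht)).differentiableAt).differentiableWithinAt
    · intro t ht
      rw [interior_Ici] at ht
      rw [(hfderiv t (le_of_lt ht)).deriv]
      exact hfderiv_nonpos t (le_of_lt ht)
  -- f along the sequence tends to 0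
  have hseq0 : Tendsto (fun k => f (tk k)) atTop (𝓝 0) := by
    have h1 : Tendsto (fun k => w (tk k) - wstar) atTop (𝓝 0) := by
      have := hconv_seq.sub (tendsto_const_nhds : Tendsto (fun _ : ℕ => wstar) atTop (𝓝 wstar))
      simpa using this
    have h2 : Tendsto (fun k => (inner ℝ (w (tk k) - wstar) (w (tk k) - wstar) : ℝ)) atTop
        (𝓝 (inner ℝ (0 : EuclideanSpace ℝ (Fin n)) (0 : EuclideanSpace ℝ (Fin n)))) :=
      h1.inner h1
    simpa [hf] using h2
  -- f tends to 0 at top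
  have hf0 : Tendsto f atTop (𝓝 0) := by
    rw [Metric.tendsto_atTop]
    intro ε hε
    rw [Metric.tendsto_atTop] at hseq0
    obtain ⟨K, hK⟩ := hseq0 ε hε
    obtain ⟨K', hK'⟩ := eventually_atTop.mp (htk_top.eventually_ge_atTop t₀)
    set k := max K K'
    refine ⟨tk k, fun t ht => ?_⟩
    have htk0 : t₀ ≤ tk k := hK' k (le_max_right _ _)
    have hfk : f (tk k) < ε := by
      have := hK k (le_max_left _ _)
      rwa [Real.dist_eq, abs_of_nonneg (by linarith [hfnonneg (tk k)] : (0:ℝ) ≤ f (tk k) - 0), sub_zero] at this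
    have hle : f t ≤ f (tk k) := hanti (Set.mem_Ici.mpr htk0) (Set.mem_Ici.mpr (le_trans htk0 ht)) ht
    rw [Real.dist_eq, sub_zero, abs_of_nonneg (hfnonneg t)]
    linarith
  -- conclude convergence of w
  have hwconv : Tendsto w atTop (𝓝 wstar) := by
    rw [tendsto_iff_dist_tendsto_zero]
    have hsqrt : Tendsto (fun t => Real.sqrt (f t)) atTop (𝓝 (Real.sqrt 0)) :=
      (Real.continuous_sqrt.tendsto 0).comp hf0
    rw [Real.sqrt_zero] at hsqrt
    convert hsqrt using 2 with t
    rw [dist_eq_norm]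
    show ‖w t - wstar‖ = Real.sqrt (inner ℝ (w t - wstar) (w t - wstar))
    rw [real_inner_self_eq_norm_sq, Real.sqrt_sq (norm_nonneg _)]
  exact ⟨hwconv, hmin⟩
end

section
/- Let f, g_j (j = 1,…,m), h_i (i = 1,…,l), G_k, H_k (k = 1,…,s) : ℝⁿ → ℝ be continuously differentiable, and for β > 0 consider the regularized problem NLP(β): minimize f(w) subject to g_j(w) ≤ 0, h_i(w) = 0, G_k(w) ≥ 0, H_k(w) ≥ 0, and B_k(w,β) := φ(G_k(w) - β, H_k(w) - β) ≤ 0. Let {β_t} be a sequence of positive numbers with β_t → 0, and for each t let w^{β_t} be a KKT point of NLP(β_t) with associated multiplier vector (ξ^{β_t}, u^{β_t}); assume (w^{β_t}, ξ^{β_t}, u^{β_t}) → (w*, ξ*, u*) as t → ∞. If MPCC-LICQ holds at w*, then w* is an M-stationary point of the MPCC, i.e., there exist multipliers λ ∈ ℝᵐ, ξ ∈ ℝˡ, η, ζ ∈ ℝˢ with ∇f(w*) + Σ_j λ_j∇g_j(w*) + Σ_i ξ_i∇h_i(w*) − Σ_k η_k∇G_k(w*) − Σ_k ζ_k∇H_k(w*)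 = 0, λ_j ≥ 0 and λ_j·g_j(w*) = 0 for all j, η_k = 0 for k ∈ I₊₀(w*), ζ_k = 0 for k ∈ I₀₊(w*), and for every k ∈ I₀₀(w*) either (η_k > 0 and ζ_k > 0) or η_k·ζ_k = 0. -/
open Filter Topology Finset Asymptotics

/-- first partial of phi -/
noncomputable def phiD1 (p q : ℝ) : ℝ := max q (-p)
/-- second partial of phi -/
noncomputable def phiD2 (p q : ℝ) : ℝ := max p (-q)

lemma hasFDerivAt_phi (p q : ℝ) :
    HasFDerivAt (fun x : ℝ × ℝ => phi x.1 x.2)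
      (phiD1 p q • ContinuousLinearMap.fst ℝ ℝ ℝ +
        phiD2 p q • ContinuousLinearMap.snd ℝ ℝ ℝ) (p, q) := by
  rcases lt_trichotomy (p + q) 0 with hpq | hpq | hpq
  · -- negative branch
    have hD : HasFDerivAt (fun x : ℝ × ℝ => -(x.1 ^ 2 + x.2 ^ 2) / 2)
        ((phiD1 p q • ContinuousLinearMap.fst ℝ ℝ ℝ +
          phiD2 p q • ContinuousLinearMap.snd ℝ ℝ ℝ)) (p, q) := by
      have h1 : HasFDerivAt (fun x : ℝ × ℝ => x.1 * x.1) (p • ContinuousLinearMap.fst ℝ ℝ ℝ + p • ContinuousLinearMap.fst ℝ ℝ ℝ) (p, q) := (hasFDerivAt_fst (p := (p, q))).fun_mul (𝕜 := ℝ) (hasFDerivAt_fst (p := (p, q)))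
      have h2 : HasFDerivAt (fun x : ℝ × ℝ => x.2 * x.2) (q • ContinuousLinearMap.snd ℝ ℝ ℝ + q • ContinuousLinearMap.snd ℝ ℝ ℝ) (p, q) := (hasFDerivAt_snd (p := (p, q))).fun_mul (𝕜 := ℝ) (hasFDerivAt_snd (p := (p, q)))
      have h3 := (((h1.add h2).neg)).const_mul (1 / 2 : ℝ)
      have h4 : HasFDerivAt (fun x : ℝ × ℝ => -(x.1 ^ 2 + x.2 ^ 2) / 2)
          ((1 / 2 : ℝ) • -(p • ContinuousLinearMap.fst ℝ ℝ ℝ + p • ContinuousLinearMap.fst ℝ ℝ ℝ +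
            (q • ContinuousLinearMap.snd ℝ ℝ ℝ + q • ContinuousLinearMap.snd ℝ ℝ ℝ))) (p, q) := by
        refine h3.congr_of_eventuallyEq (Eventually.of_forall fun x => ?_)
        simp only [Pi.add_apply, Pi.neg_apply]; ring
      convert h4 using 1
      ext <;> simp [phiD1, phiD2, max_eq_right (by linarith : q ≤ -p),
          max_eq_right (by linarith : p ≤ -q)] <;> ring
    apply hD.congr_of_eventuallyEq
    have hopen : IsOpen {x : ℝ × ℝ | x.1 + x.2 < 0} :=
      isOpen_lt (continuous_fst.add continuous_snd) continuous_const
    filter_upwards [hopen.mem_nhds (by simpa using hpq)] with x hx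
    simp [phi, not_le.mpr hx]
  · -- boundary case p + q = 0
    have hq : q = -p := by linarith
    rw [hasFDerivAt_iff_isLittleO_nhds_zero]
    have hrem : ∀ h : ℝ × ℝ,
        phi ((p, q) + h).1 ((p, q) + h).2 - phi p q -
          (phiD1 p q • ContinuousLinearMap.fst ℝ ℝ ℝ +
            phiD2 p q • ContinuousLinearMap.snd ℝ ℝ ℝ) h = phi h.1 h.2 := by
      intro h
      subst hq
      simp only [phi, phiD1, phiD2, Prod.fst_add, Prod.snd_add,
        ContinuousLinearMap.add_apply, ContinuousLinearMap.smul_apply,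
        ContinuousLinearMap.coe_fst', ContinuousLinearMap.coe_snd', smul_eq_mul,
        neg_neg, max_self, max_eq_right (le_refl p)]
      simp only [show p + h.1 + (-p + h.2) = h.1 + h.2 from by ring]
      rw [if_pos (by linarith : (0:ℝ) ≤ p + -p)]
      split <;> ring
    have : (fun h : ℝ × ℝ =>
        phi ((p, q) + h).1 ((p, q) + h).2 - phi p q -
          (phiD1 p q • ContinuousLinearMap.fst ℝ ℝ ℝ +
            phiD2 p q • ContinuousLinearMap.snd ℝ ℝ ℝ) h)
        = fun h : ℝ × ℝ => phi h.1 h.2 := funext hrem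
    rw [this]
    rw [isLittleO_iff]
    intro c hc
    filter_upwards [Metric.ball_mem_nhds (0 : ℝ × ℝ) hc] with x hx
    have hx1 : |x.1| ≤ ‖x‖ := by simpa [Real.norm_eq_abs] using norm_fst_le x
    have hx2 : |x.2| ≤ ‖x‖ := by simpa [Real.norm_eq_abs] using norm_snd_le x
    have hxc : ‖x‖ < c := by simpa using mem_ball_iff_norm.mp hx
    have h0 : (0:ℝ) ≤ ‖x‖ := norm_nonneg x
    have hbd : |phi x.1 x.2| ≤ ‖x‖ * ‖x‖ := by
      unfold phi
      split
      · calc |x.1 * x.2| = |x.1| * |x.2| := abs_mul _ _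
          _ ≤ ‖x‖ * ‖x‖ := by
            exact mul_le_mul hx1 hx2 (abs_nonneg _) h0
      · rw [abs_le]
        constructor <;> nlinarith [abs_nonneg x.1, abs_nonneg x.2, sq_abs x.1, sq_abs x.2]
    calc ‖phi x.1 x.2‖ = |phi x.1 x.2| := rfl
      _ ≤ ‖x‖ * ‖x‖ := hbd
      _ ≤ c * ‖x‖ := by nlinarith
  · -- positive branch
    have hD : HasFDerivAt (fun x : ℝ × ℝ => x.1 * x.2)
        ((phiD1 p q • ContinuousLinearMap.fst ℝ ℝ ℝ +
          phiD2 p q • ContinuousLinearMap.snd ℝ ℝ ℝ)) (p, q) := by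
      have h3 : HasFDerivAt (fun x : ℝ × ℝ => x.1 * x.2) (p • ContinuousLinearMap.snd ℝ ℝ ℝ + q • ContinuousLinearMap.fst ℝ ℝ ℝ) (p, q) := (hasFDerivAt_fst (p := (p, q))).fun_mul (𝕜 := ℝ) (hasFDerivAt_snd (p := (p, q)))
      convert h3 using 1
      ext <;> simp [phiD1, phiD2, max_eq_left (by linarith : -p ≤ q),
          max_eq_left (by linarith : -q ≤ p)] <;> ring
    apply hD.congr_of_eventuallyEq
    have hopen : IsOpen {x : ℝ × ℝ | 0 < x.1 + x.2} :=
      isOpen_lt continuous_const (continuous_fst.add continuous_snd)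
    filter_upwards [hopen.mem_nhds (by simpa using hpq)] with x hx
    simp [phi, le_of_lt hx]

open InnerProductSpace in
lemma hasGradientAt_comp_phi {n : ℕ} (G H : EuclideanSpace ℝ (Fin n) → ℝ) (b : ℝ)
    (w : EuclideanSpace ℝ (Fin n))
    (hG : DifferentiableAt ℝ G w) (hH : DifferentiableAt ℝ H w) :
    HasGradientAt (fun u => phi (G u - b) (H u - b))
      (phiD1 (G w - b) (H w - b) • gradient G w +
        phiD2 (G w - b) (H w - b) • gradient H w) w := by
  have h1 : HasFDerivAt (fun u : EuclideanSpace ℝ (Fin n) => ((G u - b, H u - b) : ℝ × ℝ))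
      ((fderiv ℝ G w).prod (fderiv ℝ H w)) w :=
    (hG.hasFDerivAt.sub_const b).prodMk (hH.hasFDerivAt.sub_const b)
  have h2 := (hasFDerivAt_phi (G w - b) (H w - b)).comp w h1
  have h3 : HasFDerivAt (fun u => phi (G u - b) (H u - b))
      (phiD1 (G w - b) (H w - b) • fderiv ℝ G w +
        phiD2 (G w - b) (H w - b) • fderiv ℝ H w) w := by
    convert h2 using 1
    all_goals (ext v; simp)
  rw [hasGradientAt_iff_hasFDerivAt]
  refine h3.congr_fderiv ?_
  have eG : toDual ℝ (EuclideanSpace ℝ (Fin n)) (gradient G w) = fderiv ℝ G w := by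
    rw [gradient]; exact (toDual ℝ (EuclideanSpace ℝ (Fin n))).apply_symm_apply _
  have eH : toDual ℝ (EuclideanSpace ℝ (Fin n)) (gradient H w) = fderiv ℝ H w := by
    rw [gradient]; exact (toDual ℝ (EuclideanSpace ℝ (Fin n))).apply_symm_apply _
  rw [← eG, ← eH]
  ext v
  simp

lemma continuous_gradient {n : ℕ} {f : EuclideanSpace ℝ (Fin n) → ℝ}
    (hf : ContDiff ℝ 1 f) : Continuous (gradient f) := by
  have h1 : Continuous (fun x => fderiv ℝ f x) := hf.continuous_fderiv one_ne_zero
  exact ((InnerProductSpace.toDual ℝ _).symm.continuous).comp h1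
lemma kkt_rearrange {E : Type*} [AddCommGroup E] [Module ℝ E] {m l s : ℕ}
    (F : E) (a : Fin m → ℝ) (vg : Fin m → E) (c : Fin l → ℝ) (vh : Fin l → E)
    (mu nu rho p1 p2 : Fin s → ℝ) (vG vH : Fin s → E)
    (hyp : F + ∑ j, a j • vg j + ∑ i, c i • vh i - ∑ k, mu k • vG k - ∑ k, nu k • vH k
      + ∑ k, rho k • (p1 k • vG k + p2 k • vH k) = 0) :
    F + ∑ j, a j • vg j + ∑ i, c i • vh i
      - ∑ k, (mu k - rho k * p1 k) • vG k - ∑ k, (nu k - rho k * p2 k) • vH k = 0 := by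
  simp only [sub_smul, smul_add, smul_smul, Finset.sum_sub_distrib,
    Finset.sum_add_distrib] at hyp ⊢
  refine Eq.trans ?_ hyp
  module

/-- Kanzow–Schwartz convergence theorem: if w^{β_t} are KKT points of the
regularized problems NLP(β_t) whose multipliers converge, β_t → 0,
(w^{β_t}, multipliers) → (w*, multipliers*), and MPCC-LICQ holds at w*,
then w* is an M-stationary point of the MPCC. -/
theorem kkt_limit_is_m_stationary {n m l s : ℕ}
    (f : EuclideanSpace ℝ (Fin n) → ℝ)
    (g : Fin m → EuclideanSpace ℝ (Fin n) → ℝ)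
    (h : Fin l → EuclideanSpace ℝ (Fin n) → ℝ)
    (G H : Fin s → EuclideanSpace ℝ (Fin n) → ℝ)
    (hf : ContDiff ℝ 1 f) (hg : ∀ j, ContDiff ℝ 1 (g j))
    (hh : ∀ i, ContDiff ℝ 1 (h i))
    (hG : ∀ k, ContDiff ℝ 1 (G k)) (hH : ∀ k, ContDiff ℝ 1 (H k))
    -- sequence of regularization parameters
    (β : ℕ → ℝ) (hβ_pos : ∀ t, 0 < β t) (hβ_lim : Tendsto β atTop (𝓝 0))
    -- sequence of KKT points of NLP(β_t) with their multipliers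
    (wseq : ℕ → EuclideanSpace ℝ (Fin n))
    (lam : ℕ → Fin m → ℝ) (xi : ℕ → Fin l → ℝ)
    (mu nu rho : ℕ → Fin s → ℝ)
    -- feasibility of w^{β_t} for NLP(β_t)
    (hfeas_g : ∀ t j, g j (wseq t) ≤ 0)
    (hfeas_h : ∀ t i, h i (wseq t) = 0)
    (hfeas_G : ∀ t k, 0 ≤ G k (wseq t))
    (hfeas_H : ∀ t k, 0 ≤ H k (wseq t))
    (hfeas_B : ∀ t k, phi (G k (wseq t) - β t) (H k (wseq t) - β t) ≤ 0)
    -- nonnegativity and complementary slackness of the inequality multipliers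
    (hlam : ∀ t j, 0 ≤ lam t j ∧ lam t j * g j (wseq t) = 0)
    (hmu : ∀ t k, 0 ≤ mu t k ∧ mu t k * G k (wseq t) = 0)
    (hnu : ∀ t k, 0 ≤ nu t k ∧ nu t k * H k (wseq t) = 0)
    (hrho : ∀ t k, 0 ≤ rho t k ∧
      rho t k * phi (G k (wseq t) - β t) (H k (wseq t) - β t) = 0)
    -- vanishing of the gradient of the Lagrangian of NLP(β_t)
    (hgrad : ∀ t,
      gradient f (wseq t) + ∑ j, lam t j • gradient (g j) (wseq t)
        + ∑ i, xi t i • gradient (h i) (wseq t)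
        - ∑ k, mu t k • gradient (G k) (wseq t)
        - ∑ k, nu t k • gradient (H k) (wseq t)
        + ∑ k, rho t k •
            gradient (fun u => phi (G k u - β t) (H k u - β t)) (wseq t) = 0)
    -- convergence of the KKT points and of all multipliers
    (wstar : EuclideanSpace ℝ (Fin n))
    (hw_lim : Tendsto wseq atTop (𝓝 wstar))
    (lamstar : Fin m → ℝ) (xistar : Fin l → ℝ) (mustar nustar rhostar : Fin s → ℝ)
    (hlam_lim : Tendsto lam atTop (𝓝 lamstar))
    (hxi_lim : Tendsto xi atTop (𝓝 xistar))
    (hmu_lim : Tendsto mu atTop (𝓝 mustar))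
    (hnu_lim : Tendsto nu atTop (𝓝 nustar))
    (hrho_lim : Tendsto rho atTop (𝓝 rhostar))
    -- MPCC-LICQ at w*
    (hlicq : LinearIndependent ℝ
      (fun idx : {j : Fin m // g j wstar = 0} ⊕ Fin l ⊕
          {k : Fin s // G k wstar = 0 ∧ (0 < H k wstar ∨ H k wstar = 0)} ⊕
          {k : Fin s // H k wstar = 0 ∧ (0 < G k wstar ∨ G k wstar = 0)} =>
        match idx with
        | Sum.inl j => gradient (g j.1) wstar
        | Sum.inr (Sum.inl i) => gradient (h i) wstar
        | Sum.inr (Sum.inr (Sum.inl k)) => gradient (G k.1) wstar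
        | Sum.inr (Sum.inr (Sum.inr k)) => gradient (H k.1) wstar)) :
    -- conclusion: w* is an M-stationary point of the MPCC
    (∀ j, g j wstar ≤ 0) ∧ (∀ i, h i wstar = 0) ∧
    (∀ k, 0 ≤ G k wstar) ∧ (∀ k, 0 ≤ H k wstar) ∧
    (∀ k, G k wstar * H k wstar = 0) ∧
    ∃ (lam' : Fin m → ℝ) (xi' : Fin l → ℝ) (eta zeta : Fin s → ℝ),
      (gradient f wstar + ∑ j, lam' j • gradient (g j) wstar
        + ∑ i, xi' i • gradient (h i) wstar
        - ∑ k, eta k • gradient (G k) wstar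
        - ∑ k, zeta k • gradient (H k) wstar = 0) ∧
      (∀ j, 0 ≤ lam' j ∧ lam' j * g j wstar = 0) ∧
      (∀ k, 0 < G k wstar → H k wstar = 0 → eta k = 0) ∧
      (∀ k, G k wstar = 0 → 0 < H k wstar → zeta k = 0) ∧
      (∀ k, G k wstar = 0 → H k wstar = 0 →
        (0 < eta k ∧ 0 < zeta k) ∨ eta k * zeta k = 0) := by
  classical
  -- continuity helpers
  have tg : ∀ j, Tendsto (fun t => g j (wseq t)) atTop (𝓝 (g j wstar)) :=
    fun j => (((hg j).continuous.tendsto wstar).comp hw_lim)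
  have th : ∀ i, Tendsto (fun t => h i (wseq t)) atTop (𝓝 (h i wstar)) :=
    fun i => (((hh i).continuous.tendsto wstar).comp hw_lim)
  have tG : ∀ k, Tendsto (fun t => G k (wseq t)) atTop (𝓝 (G k wstar)) :=
    fun k => (((hG k).continuous.tendsto wstar).comp hw_lim)
  have tH : ∀ k, Tendsto (fun t => H k (wseq t)) atTop (𝓝 (H k wstar)) :=
    fun k => (((hH k).continuous.tendsto wstar).comp hw_lim)
  have tlam : ∀ j, Tendsto (fun t => lam t j) atTop (𝓝 (lamstar j)) :=
    fun j => tendsto_pi_nhds.mp hlam_lim j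
  have txi : ∀ i, Tendsto (fun t => xi t i) atTop (𝓝 (xistar i)) :=
    fun i => tendsto_pi_nhds.mp hxi_lim i
  have tmu : ∀ k, Tendsto (fun t => mu t k) atTop (𝓝 (mustar k)) :=
    fun k => tendsto_pi_nhds.mp hmu_lim k
  have tnu : ∀ k, Tendsto (fun t => nu t k) atTop (𝓝 (nustar k)) :=
    fun k => tendsto_pi_nhds.mp hnu_lim k
  have trho : ∀ k, Tendsto (fun t => rho t k) atTop (𝓝 (rhostar k)) :=
    fun k => tendsto_pi_nhds.mp hrho_lim k
  -- feasibility of the limit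
  have hg0 : ∀ j, g j wstar ≤ 0 :=
    fun j => le_of_tendsto (tg j) (Eventually.of_forall fun t => hfeas_g t j)
  have hh0 : ∀ i, h i wstar = 0 := fun i =>
    tendsto_nhds_unique (th i) (tendsto_const_nhds.congr fun t => (hfeas_h t i).symm)
  have hG0 : ∀ k, 0 ≤ G k wstar :=
    fun k => ge_of_tendsto (tG k) (Eventually.of_forall fun t => hfeas_G t k)
  have hH0 : ∀ k, 0 ≤ H k wstar :=
    fun k => ge_of_tendsto (tH k) (Eventually.of_forall fun t => hfeas_H t k)
  have hGH : ∀ k, G k wstar * H k wstar = 0 := by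
    intro k
    by_contra hne
    have hG1 : G k wstar ≠ 0 := fun e => hne (by rw [e, zero_mul])
    have hH1 : H k wstar ≠ 0 := fun e => hne (by rw [e, mul_zero])
    have hGpos : 0 < G k wstar := (hG0 k).lt_of_ne (Ne.symm hG1)
    have hHpos : 0 < H k wstar := (hH0 k).lt_of_ne (Ne.symm hH1)
    have e1 : ∀ᶠ t in atTop, G k wstar / 2 < G k (wseq t) :=
      (tG k).eventually_const_lt (by linarith)
    have e2 : ∀ᶠ t in atTop, H k wstar / 2 < H k (wseq t) :=
      (tH k).eventually_const_lt (by linarith)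
    have e3 : ∀ᶠ t in atTop, β t < min (G k wstar / 2) (H k wstar / 2) :=
      hβ_lim.eventually_lt_const (by positivity)
    obtain ⟨t, h1, h2, h3⟩ := (e1.and (e2.and e3)).exists
    have hb1 : β t < G k wstar / 2 := lt_of_lt_of_le h3 (min_le_left _ _)
    have hb2 : β t < H k wstar / 2 := lt_of_lt_of_le h3 (min_le_right _ _)
    have hB := hfeas_B t k
    rw [phi, if_pos (by linarith)] at hB
    nlinarith
  -- rewrite the KKT gradient equation in M-stationary form
  have hdiffG : ∀ k t, DifferentiableAt ℝ (G k) (wseq t) :=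
    fun k t => ((hG k).differentiable one_ne_zero).differentiableAt
  have hdiffH : ∀ k t, DifferentiableAt ℝ (H k) (wseq t) :=
    fun k t => ((hH k).differentiable one_ne_zero).differentiableAt
  have hgradB : ∀ t k, gradient (fun u => phi (G k u - β t) (H k u - β t)) (wseq t)
      = phiD1 (G k (wseq t) - β t) (H k (wseq t) - β t) • gradient (G k) (wseq t)
        + phiD2 (G k (wseq t) - β t) (H k (wseq t) - β t) • gradient (H k) (wseq t) :=
    fun t k => (hasGradientAt_comp_phi (G k) (H k) (β t) (wseq t)
      (hdiffG k t) (hdiffH k t)).gradient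
  have hgrad2 : ∀ t,
      gradient f (wseq t) + ∑ j, lam t j • gradient (g j) (wseq t)
        + ∑ i, xi t i • gradient (h i) (wseq t)
        - ∑ k, (mu t k - rho t k * phiD1 (G k (wseq t) - β t) (H k (wseq t) - β t))
            • gradient (G k) (wseq t)
        - ∑ k, (nu t k - rho t k * phiD2 (G k (wseq t) - β t) (H k (wseq t) - β t))
            • gradient (H k) (wseq t) = 0 := by
    intro t
    have hgt := hgrad t
    simp only [hgradB] at hgt
    exact kkt_rearrange _ _ _ _ _ _ _ _ _ _ _ _ hgt
  -- tendsto of the modified multipliers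
  have ta : ∀ k, Tendsto
      (fun t => phiD1 (G k (wseq t) - β t) (H k (wseq t) - β t)) atTop
      (𝓝 (phiD1 (G k wstar) (H k wstar))) := by
    intro k
    unfold phiD1
    have := (((tH k).sub hβ_lim)).max ((((tG k).sub hβ_lim)).neg)
    simpa using this
  have tb : ∀ k, Tendsto
      (fun t => phiD2 (G k (wseq t) - β t) (H k (wseq t) - β t)) atTop
      (𝓝 (phiD2 (G k wstar) (H k wstar))) := by
    intro k
    unfold phiD2
    have := (((tG k).sub hβ_lim)).max ((((tH k).sub hβ_lim)).neg)
    simpa using this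
  have teta : ∀ k, Tendsto
      (fun t => mu t k - rho t k * phiD1 (G k (wseq t) - β t) (H k (wseq t) - β t))
      atTop (𝓝 (mustar k - rhostar k * phiD1 (G k wstar) (H k wstar))) :=
    fun k => (tmu k).sub ((trho k).mul (ta k))
  have tzeta : ∀ k, Tendsto
      (fun t => nu t k - rho t k * phiD2 (G k (wseq t) - β t) (H k (wseq t) - β t))
      atTop (𝓝 (nustar k - rhostar k * phiD2 (G k wstar) (H k wstar))) :=
    fun k => (tnu k).sub ((trho k).mul (tb k))
  -- pass to the limit in the gradient equation
  have key : Tendsto (fun t =>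
      gradient f (wseq t) + ∑ j, lam t j • gradient (g j) (wseq t)
        + ∑ i, xi t i • gradient (h i) (wseq t)
        - ∑ k, (mu t k - rho t k * phiD1 (G k (wseq t) - β t) (H k (wseq t) - β t))
            • gradient (G k) (wseq t)
        - ∑ k, (nu t k - rho t k * phiD2 (G k (wseq t) - β t) (H k (wseq t) - β t))
            • gradient (H k) (wseq t)) atTop
      (𝓝 (gradient f wstar + ∑ j, lamstar j • gradient (g j) wstar
        + ∑ i, xistar i • gradient (h i) wstar
        - ∑ k, (mustar k - rhostar k * phiD1 (G k wstar) (H k wstar))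
            • gradient (G k) wstar
        - ∑ k, (nustar k - rhostar k * phiD2 (G k wstar) (H k wstar))
            • gradient (H k) wstar)) := by
    apply Tendsto.sub
    apply Tendsto.sub
    apply Tendsto.add
    apply Tendsto.add
    · exact ((continuous_gradient hf).tendsto wstar).comp hw_lim
    · exact tendsto_finset_sum _ fun j _ =>
        (tlam j).smul (((continuous_gradient (hg j)).tendsto wstar).comp hw_lim)
    · exact tendsto_finset_sum _ fun i _ =>
        (txi i).smul (((continuous_gradient (hh i)).tendsto wstar).comp hw_lim)
    · exact tendsto_finset_sum _ fun k _ =>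
        (teta k).smul (((continuous_gradient (hG k)).tendsto wstar).comp hw_lim)
    · exact tendsto_finset_sum _ fun k _ =>
        (tzeta k).smul (((continuous_gradient (hH k)).tendsto wstar).comp hw_lim)
  have star_eq := tendsto_nhds_unique key
    (tendsto_const_nhds.congr fun t => (hgrad2 t).symm)
  refine ⟨hg0, hh0, hG0, hH0, hGH, lamstar, xistar,
    (fun k => mustar k - rhostar k * phiD1 (G k wstar) (H k wstar)),
    (fun k => nustar k - rhostar k * phiD2 (G k wstar) (H k wstar)),
    star_eq, ?_, ?_, ?_, ?_⟩
  · intro j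
    refine ⟨ge_of_tendsto (tlam j) (Eventually.of_forall fun t => (hlam t j).1), ?_⟩
    exact tendsto_nhds_unique ((tlam j).mul (tg j))
      (tendsto_const_nhds.congr fun t => ((hlam t j).2).symm)
  · intro k hGpos hHzero
    show mustar k - rhostar k * phiD1 (G k wstar) (H k wstar) = 0
    have haS : phiD1 (G k wstar) (H k wstar) = 0 := by
      rw [hHzero]; unfold phiD1; rw [max_eq_left (by linarith)]
    have hmus : mustar k = 0 := by
      have e2 : ∀ᶠ t in atTop, mu t k = 0 := by
        filter_upwards [(tG k).eventually_const_lt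
          (by linarith : G k wstar / 2 < G k wstar)] with t ht
        have h2 := (hmu t k).2
        have hGt : G k (wseq t) ≠ 0 := by
          have := half_pos hGpos; intro e; rw [e] at ht; linarith
        exact (mul_eq_zero.mp h2).resolve_right hGt
      exact tendsto_nhds_unique (tmu k) (tendsto_const_nhds.congr' (e2.mono fun t ht => ht.symm))
    rw [haS, hmus]; ring
  · intro k hGzero hHpos
    show nustar k - rhostar k * phiD2 (G k wstar) (H k wstar) = 0
    have hbS : phiD2 (G k wstar) (H k wstar) = 0 := by
      rw [hGzero]; unfold phiD2; rw [max_eq_left (by linarith)]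
    have hnus : nustar k = 0 := by
      have e2 : ∀ᶠ t in atTop, nu t k = 0 := by
        filter_upwards [(tH k).eventually_const_lt
          (by linarith : H k wstar / 2 < H k wstar)] with t ht
        have h2 := (hnu t k).2
        have hHt : H k (wseq t) ≠ 0 := by
          have := half_pos hHpos; intro e; rw [e] at ht; linarith
        exact (mul_eq_zero.mp h2).resolve_right hHt
      exact tendsto_nhds_unique (tnu k) (tendsto_const_nhds.congr' (e2.mono fun t ht => ht.symm))
    rw [hbS, hnus]; ring
  · intro k hGzero hHzero
    show (0 < mustar k - rhostar k * phiD1 (G k wstar) (H k wstar) ∧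
        0 < nustar k - rhostar k * phiD2 (G k wstar) (H k wstar)) ∨
      (mustar k - rhostar k * phiD1 (G k wstar) (H k wstar)) *
        (nustar k - rhostar k * phiD2 (G k wstar) (H k wstar)) = 0
    have haS : phiD1 (G k wstar) (H k wstar) = 0 := by
      rw [hGzero, hHzero]; unfold phiD1; simp
    have hbS : phiD2 (G k wstar) (H k wstar) = 0 := by
      rw [hGzero, hHzero]; unfold phiD2; simp
    have hmus : 0 ≤ mustar k :=
      ge_of_tendsto (tmu k) (Eventually.of_forall fun t => (hmu t k).1)
    have hnus : 0 ≤ nustar k :=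
      ge_of_tendsto (tnu k) (Eventually.of_forall fun t => (hnu t k).1)
    simp only [haS, hbS, mul_zero, sub_zero]
    by_cases hcase : 0 < mustar k ∧ 0 < nustar k
    · exact Or.inl hcase
    · right
      rcases not_and_or.mp hcase with hc | hc
      · have : mustar k = 0 := le_antisymm (not_lt.mp hc) hmus
        rw [this]; ring
      · have : nustar k = 0 := le_antisymm (not_lt.mp hc) hnus
        rw [this]; ring
end
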